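/- Exponent reduction in time. Fix a dimension n ≥ 1, exponents q > 0, α > 0 and β ∈ (α/2, α), and let u : Ω × Q₁ → ℝ be jointly measurable with ‖u‖_{α,q,Q₁} < ∞ almost surely. Suppose there exist constants δ(α) > 0 and Γ(α) ≥ 1 such that for all 0 < r < R ≤ 1, all a > 0 and all Γ > Γ(α), P( ‖u‖_{∞,Q_r} > a and (R−r)^{−(n/q+2/α)}·‖u‖_{α,q,Q_R} ≤ a/Γ ) ≤ exp(−Γ^{δ(α)}/R²). Then there exist constants δ(β) > 0 and Γ(β) ≥ 1, depending only on n, q, α, β, δ(α) and Γ(α), such that for all Γ > Γ(β), all a > 0 and all 0 < r ≤ 1/2, P( ‖u‖_{∞,Q_r} > a and r^{−(n/q+2/β)}·‖u‖_{β,q,Q_{2r}} ≤ a/Γ ) ≤ exp(−Γ^{δ(β)}/(4r²)). -/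

import Mathlib

open MeasureTheory
open scoped ENNReal
open Filter Topology

noncomputable section

/-- The parabolic cylinder `Q_r(t₀,x₀) = (t₀ - r², t₀] × B_r(x₀)`, where the ball is
taken with respect to the sup norm on `Fin n → ℝ`. -/
def pCyl (n : ℕ) (r : ℝ) (c : ℝ × (Fin n → ℝ)) : Set (ℝ × (Fin n → ℝ)) :=
  Set.Ioc (c.1 - r ^ 2) c.1 ×ˢ Metric.ball c.2 r

/-- The mixed norm `‖h‖_{p,q,I×B} = (∫_I (∫_B |h(t,x)|^q dx)^{p/q} dt)^{1/p}`,
valued in `ℝ≥0∞`. -/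
def mixedNorm (n : ℕ) (p q : ℝ) (I : Set ℝ) (B : Set (Fin n → ℝ))
    (h : ℝ × (Fin n → ℝ) → ℝ) : ℝ≥0∞ :=
  (∫⁻ t in I, (∫⁻ x in B, ENNReal.ofReal (|h (t, x)| ^ q)) ^ (p / q)) ^ (1 / p)

/-- The essential supremum of `|h|` over `D ⊆ ℝ × ℝⁿ` with respect to Lebesgue
measure, valued in `ℝ≥0∞`. -/
def supNorm (n : ℕ) (D : Set (ℝ × (Fin n → ℝ))) (h : ℝ × (Fin n → ℝ) → ℝ) : ℝ≥0∞ :=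
  essSup (fun z => ENNReal.ofReal |h z|) (volume.restrict D)


lemma measurable_mixedNorm {Ω : Type*} [MeasurableSpace Ω] {n : ℕ}
    (u : Ω → ℝ × (Fin n → ℝ) → ℝ) (hu : Measurable (Function.uncurry u))
    (p q : ℝ) (I : Set ℝ) (B : Set (Fin n → ℝ)) :
    Measurable fun ω => mixedNorm n p q I B (u ω) := by
  have h0 : Measurable fun z : (Ω × ℝ) × (Fin n → ℝ) =>
      ENNReal.ofReal (|u z.1.1 (z.1.2, z.2)| ^ q) := by
    have hm : Measurable fun z : (Ω × ℝ) × (Fin n → ℝ) => u z.1.1 (z.1.2, z.2) :=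
      hu.comp ((measurable_fst.comp measurable_fst).prodMk
        ((measurable_snd.comp measurable_fst).prodMk measurable_snd))
    exact (hm.abs.pow_const q).ennreal_ofReal
  have h1 : Measurable fun p' : Ω × ℝ =>
      (∫⁻ x in B, ENNReal.ofReal (|u p'.1 (p'.2, x)| ^ q)) ^ (p / q) :=
    (Measurable.lintegral_prod_right' h0).pow_const _
  have h2 : Measurable fun ω => ∫⁻ t in I,
      (∫⁻ x in B, ENNReal.ofReal (|u ω (t, x)| ^ q)) ^ (p / q) :=
    Measurable.lintegral_prod_right' h1
  exact h2.pow_const _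

lemma interp_bound {n : ℕ} {v : ℝ × (Fin n → ℝ) → ℝ} (hv : Measurable v)
    {q α β ρ τ A M D : ℝ} (hq : 0 < q) (hβ : 0 < β) (hβα : β < α)
    (hρ : 0 < ρ) (hρτ : ρ ≤ τ) (hA : 0 ≤ A) (hM : 0 ≤ M) (hD : (2 * ρ) ^ n ≤ D)
    (hS : supNorm n (pCyl n ρ (1, 0)) v ≤ ENNReal.ofReal A)
    (hN : mixedNorm n β q (Set.Ioc (1 - τ ^ 2) 1) (Metric.ball (0 : Fin n → ℝ) τ) v
      ≤ ENNReal.ofReal M) :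
    mixedNorm n α q (Set.Ioc (1 - ρ ^ 2) 1) (Metric.ball (0 : Fin n → ℝ) ρ) v ≤
      ENNReal.ofReal (((A ^ q * D) ^ ((α - β) / q) * M ^ β) ^ (1 / α)) := by
  have hα : 0 < α := hβ.trans hβα
  set I : Set ℝ := Set.Ioc (1 - ρ ^ 2) 1 with hI
  set B : Set (Fin n → ℝ) := Metric.ball (0 : Fin n → ℝ) ρ with hB
  set g : ℝ → ℝ≥0∞ := fun t => ∫⁻ x in B, ENNReal.ofReal (|v (t, x)| ^ q) with hg
  have hgmeas : Measurable g := by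
    have h0 : Measurable fun z : ℝ × (Fin n → ℝ) => ENNReal.ofReal (|v z| ^ q) :=
      (hv.abs.pow_const q).ennreal_ofReal
    exact Measurable.lintegral_prod_right' h0
  have hDnn : (0 : ℝ) ≤ D := le_trans (by positivity) hD
  -- a.e. bound on slices
  have hmeas_eq : ((volume : Measure ℝ).restrict I).prod
      ((volume : Measure (Fin n → ℝ)).restrict B)
      = (volume : Measure (ℝ × (Fin n → ℝ))).restrict (pCyl n ρ (1, 0)) := by
    rw [Measure.prod_restrict, ← Measure.volume_eq_prod]
    rfl
  have aeS : ∀ᵐ z ∂(((volume : Measure ℝ).restrict I).prod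
      ((volume : Measure (Fin n → ℝ)).restrict B)),
      ENNReal.ofReal |v z| ≤ ENNReal.ofReal A := by
    rw [hmeas_eq]
    filter_upwards [ENNReal.ae_le_essSup (μ := volume.restrict (pCyl n ρ (1, 0)))
      (fun z => ENNReal.ofReal |v z|)] with z hz
    exact hz.trans hS
  have aet : ∀ᵐ t ∂((volume : Measure ℝ).restrict I),
      g t ≤ ENNReal.ofReal (A ^ q * D) := by
    filter_upwards [Measure.ae_ae_of_ae_prod aeS] with t ht
    have hvol : (volume : Measure (Fin n → ℝ)) B = ENNReal.ofReal ((2 * ρ) ^ n) := by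
      simpa using Real.volume_pi_ball (0 : Fin n → ℝ) hρ
    calc g t ≤ ∫⁻ x in B, ENNReal.ofReal (A ^ q) := by
          refine lintegral_mono_ae ?_
          filter_upwards [ht] with x hx
          rw [← ENNReal.ofReal_rpow_of_nonneg (abs_nonneg _) hq.le,
            ← ENNReal.ofReal_rpow_of_nonneg hA hq.le]
          exact ENNReal.rpow_le_rpow hx hq.le
      _ = ENNReal.ofReal (A ^ q) * volume B := setLIntegral_const _ _
      _ ≤ ENNReal.ofReal (A ^ q * D) := by
          rw [hvol, ← ENNReal.ofReal_mul (Real.rpow_nonneg hA q)]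
          exact ENNReal.ofReal_le_ofReal
            (mul_le_mul_of_nonneg_left hD (Real.rpow_nonneg hA q))
  -- pointwise interpolation
  have hpt : ∀ᵐ t ∂((volume : Measure ℝ).restrict I),
      g t ^ (α / q) ≤ ENNReal.ofReal (A ^ q * D) ^ ((α - β) / q) * g t ^ (β / q) := by
    filter_upwards [aet] with t ht
    rcases eq_or_ne (g t) 0 with h0 | h0
    · rw [h0, ENNReal.zero_rpow_of_pos (div_pos hα hq)]
      exact zero_le
    · have htop : g t ≠ ⊤ := ne_top_of_le_ne_top ENNReal.ofReal_ne_top ht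
      have hsplit : g t ^ (α / q) = g t ^ ((α - β) / q) * g t ^ (β / q) := by
        rw [← ENNReal.rpow_add _ _ h0 htop, ← add_div, sub_add_cancel]
      rw [hsplit]
      exact mul_le_mul_left (ENNReal.rpow_le_rpow ht (div_nonneg (by linarith) hq.le)) _
  have int1 : ∫⁻ t in I, g t ^ (α / q) ≤
      ENNReal.ofReal (A ^ q * D) ^ ((α - β) / q) * ∫⁻ t in I, g t ^ (β / q) := by
    calc ∫⁻ t in I, g t ^ (α / q)
        ≤ ∫⁻ t in I, ENNReal.ofReal (A ^ q * D) ^ ((α - β) / q) * g t ^ (β / q) :=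
          lintegral_mono_ae hpt
      _ = _ := lintegral_const_mul _ (hgmeas.pow_const _)
  have int2 : ∫⁻ t in I, g t ^ (β / q) ≤ ENNReal.ofReal (M ^ β) := by
    have hsub1 : I ⊆ Set.Ioc (1 - τ ^ 2) 1 :=
      Set.Ioc_subset_Ioc_left (by nlinarith)
    have hsub2 : B ⊆ Metric.ball (0 : Fin n → ℝ) τ := Metric.ball_subset_ball hρτ
    calc ∫⁻ t in I, g t ^ (β / q)
        ≤ ∫⁻ t in I, (∫⁻ x in Metric.ball (0 : Fin n → ℝ) τ,
            ENNReal.ofReal (|v (t, x)| ^ q)) ^ (β / q) := by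
          refine lintegral_mono fun t => ENNReal.rpow_le_rpow ?_ (div_nonneg hβ.le hq.le)
          exact lintegral_mono_set hsub2
      _ ≤ ∫⁻ t in Set.Ioc (1 - τ ^ 2) 1, (∫⁻ x in Metric.ball (0 : Fin n → ℝ) τ,
            ENNReal.ofReal (|v (t, x)| ^ q)) ^ (β / q) := lintegral_mono_set hsub1
      _ = (mixedNorm n β q (Set.Ioc (1 - τ ^ 2) 1)
            (Metric.ball (0 : Fin n → ℝ) τ) v) ^ β := by
          rw [mixedNorm, ← ENNReal.rpow_mul, one_div, inv_mul_cancel₀ hβ.ne',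
            ENNReal.rpow_one]
      _ ≤ (ENNReal.ofReal M) ^ β := ENNReal.rpow_le_rpow hN hβ.le
      _ = ENNReal.ofReal (M ^ β) := ENNReal.ofReal_rpow_of_nonneg hM hβ.le
  calc mixedNorm n α q I B v = (∫⁻ t in I, g t ^ (α / q)) ^ (1 / α) := rfl
    _ ≤ (ENNReal.ofReal (A ^ q * D) ^ ((α - β) / q) * ENNReal.ofReal (M ^ β)) ^ (1 / α) := by
        refine ENNReal.rpow_le_rpow ?_ (one_div_nonneg.2 hα.le)
        exact int1.trans (mul_le_mul_right int2 _)
    _ = ENNReal.ofReal (((A ^ q * D) ^ ((α - β) / q) * M ^ β) ^ (1 / α)) := by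
        rw [ENNReal.ofReal_rpow_of_nonneg (mul_nonneg (Real.rpow_nonneg hA q) hDnn)
            (div_nonneg (sub_nonneg.2 hβα.le) hq.le),
          ← ENNReal.ofReal_mul (Real.rpow_nonneg (mul_nonneg (Real.rpow_nonneg hA q) hDnn) _),
          ENNReal.ofReal_rpow_of_nonneg (mul_nonneg
            (Real.rpow_nonneg (mul_nonneg (Real.rpow_nonneg hA q) hDnn) _)
            (Real.rpow_nonneg hM β)) (one_div_nonneg.2 hα.le)]


lemma key_eq {q α β r a Γ : ℝ} (n : ℕ) (k : ℕ)
    (hq : 0 < q) (hα : 0 < α) (hβ : 0 < β) (hβα : β < α)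
    (hr : 0 < r) (ha : 0 < a) (hΓ : 0 < Γ) :
    (r * (1 / 2) ^ (k + 1)) ^ (-((n : ℝ) / q + 2 / α)) *
      (((a * ((2 : ℝ) ^ ((((n : ℝ) / q + 2 / α) + 1) / (β / α))) ^ (k + 1)) ^ q
          * (4 * r) ^ n) ^ ((α - β) / q)
        * ((r ^ ((n : ℝ) / q + 2 / β) * (a / Γ)) ^ β)) ^ (1 / α)
    = (a * ((2 : ℝ) ^ ((((n : ℝ) / q + 2 / α) + 1) / (β / α))) ^ k) /
      (((2 : ℝ) ^ (-((n : ℝ) / q + 2 / α)) *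
        ((2 : ℝ) ^ ((((n : ℝ) / q + 2 / α) + 1) / (β / α))) ^ (β / α - 1) *
        (4 : ℝ) ^ (-((n : ℝ) / q) * (1 - β / α)) * 2 ^ k * Γ ^ (β / α))) := by
  set κα : ℝ := (n : ℝ) / q + 2 / α with hκα
  set κβ : ℝ := (n : ℝ) / q + 2 / β with hκβ
  set θ : ℝ := β / α with hθ
  have hθ0 : 0 < θ := div_pos hβ hα
  set lam : ℝ := (2 : ℝ) ^ ((κα + 1) / θ) with hlam
  have hlam0 : 0 < lam := Real.rpow_pos_of_pos two_pos _
  have hbase1 : (0 : ℝ) < r * (1 / 2) ^ (k + 1) := by positivity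
  have hbase2 : (0 : ℝ) < a * lam ^ (k + 1) := by positivity
  have hbase3 : (0 : ℝ) < (a * lam ^ (k + 1)) ^ q * (4 * r) ^ n := by positivity
  have hbase4 : (0 : ℝ) < r ^ κβ * (a / Γ) := by positivity
  have hbase5 : (0 : ℝ) < ((a * lam ^ (k + 1)) ^ q * (4 * r) ^ n) ^ ((α - β) / q)
      * (r ^ κβ * (a / Γ)) ^ β := by positivity
  have hbase6 : (0 : ℝ) < (2 : ℝ) ^ (-κα) * lam ^ (θ - 1)
      * (4 : ℝ) ^ (-((n : ℝ) / q) * (1 - θ)) * 2 ^ k * Γ ^ θ := by positivity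
  have hL : (0 : ℝ) < (r * (1 / 2) ^ (k + 1)) ^ (-κα) *
      (((a * lam ^ (k + 1)) ^ q * (4 * r) ^ n) ^ ((α - β) / q)
        * ((r ^ κβ * (a / Γ)) ^ β)) ^ (1 / α) := by positivity
  have hR : (0 : ℝ) < (a * lam ^ k) /
      ((2 : ℝ) ^ (-κα) * lam ^ (θ - 1) * (4 : ℝ) ^ (-((n : ℝ) / q) * (1 - θ)) * 2 ^ k
        * Γ ^ θ) := by positivity
  refine Real.log_injOn_pos (Set.mem_Ioi.2 hL) (Set.mem_Ioi.2 hR) ?_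
  have hLlam : Real.log lam = ((κα + 1) / θ) * Real.log 2 := Real.log_rpow two_pos _
  have h1 : Real.log ((r * (1 / 2) ^ (k + 1)) ^ (-κα))
      = -κα * (Real.log r - ((k : ℝ) + 1) * Real.log 2) := by
    rw [Real.log_rpow hbase1, Real.log_mul hr.ne' (by positivity), Real.log_pow,
      one_div, Real.log_inv]
    push_cast; ring
  have h2 : Real.log ((((a * lam ^ (k + 1)) ^ q * (4 * r) ^ n) ^ ((α - β) / q)
        * ((r ^ κβ * (a / Γ)) ^ β)) ^ (1 / α))
      = (1 / α) * (((α - β) / q) * (q * (Real.log a + ((k : ℝ) + 1) * Real.log lam)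
          + (n : ℝ) * (Real.log 4 + Real.log r))
        + β * (κβ * Real.log r + (Real.log a - Real.log Γ))) := by
    rw [Real.log_rpow hbase5,
      Real.log_mul (Real.rpow_pos_of_pos hbase3 _).ne' (Real.rpow_pos_of_pos hbase4 _).ne',
      Real.log_rpow hbase3, Real.log_rpow hbase4,
      Real.log_mul (Real.rpow_pos_of_pos hbase2 _).ne' (by positivity),
      Real.log_rpow hbase2, Real.log_pow,
      Real.log_mul ha.ne' (by positivity), Real.log_pow,
      Real.log_mul (by norm_num : (4 : ℝ) ≠ 0) hr.ne',
      Real.log_mul (Real.rpow_pos_of_pos hr _).ne' (by positivity),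
      Real.log_rpow hr, Real.log_div ha.ne' hΓ.ne']
    push_cast; ring
  have h3 : Real.log ((a * lam ^ k) /
        ((2 : ℝ) ^ (-κα) * lam ^ (θ - 1) * (4 : ℝ) ^ (-((n : ℝ) / q) * (1 - θ)) * 2 ^ k
          * Γ ^ θ))
      = (Real.log a + (k : ℝ) * Real.log lam)
        - ((-κα) * Real.log 2 + (θ - 1) * Real.log lam
          + (-((n : ℝ) / q) * (1 - θ)) * Real.log 4 + (k : ℝ) * Real.log 2
          + θ * Real.log Γ) := by
    rw [Real.log_div (by positivity) hbase6.ne',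
      Real.log_mul ha.ne' (by positivity),
      Real.log_mul (by positivity) (Real.rpow_pos_of_pos hΓ _).ne',
      Real.log_mul (by positivity) (by positivity : (0:ℝ) < (2:ℝ) ^ k).ne',
      Real.log_mul (by positivity) (by positivity : (0:ℝ) < (4:ℝ) ^ (-((n : ℝ) / q) * (1 - θ))).ne',
      Real.log_mul (by positivity) (Real.rpow_pos_of_pos hlam0 _).ne',
      Real.log_rpow two_pos, Real.log_rpow hlam0, Real.log_rpow (by norm_num : (0:ℝ) < 4),
      Real.log_rpow hΓ, Real.log_pow, Real.log_pow]
  rw [Real.log_mul (Real.rpow_pos_of_pos hbase1 _).ne' (Real.rpow_pos_of_pos hbase5 _).ne',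
    h1, h2, h3, hLlam, hκβ, hθ, hκα]
  have hl4 : Real.log 4 = 2 * Real.log 2 := by
    rw [show (4 : ℝ) = 2 ^ 2 by norm_num, Real.log_pow]; push_cast; ring
  rw [hl4]
  field_simp
  ring


lemma xk_ge {c₀ δα w : ℝ} (hc : 0 < c₀) (hδ : 0 < δα) (hw1 : 1 ≤ w)
    (hw2 : 2 / c₀ ^ δα + 2 ≤ w) (hw3 : 1 / (c₀ ^ δα * δα * Real.log 2) ≤ w) (k : ℕ) :
    w + ((k : ℝ) + 1) ≤ c₀ ^ δα * (2 : ℝ) ^ ((k : ℝ) * δα) * w ^ 2 := by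
  have hL2 : 0 < Real.log 2 := Real.log_pos one_lt_two
  have hcd : (0 : ℝ) < c₀ ^ δα := Real.rpow_pos_of_pos hc _
  have hkn : (0 : ℝ) ≤ (k : ℝ) := Nat.cast_nonneg k
  have h2k : 1 + (k : ℝ) * δα * Real.log 2 ≤ (2 : ℝ) ^ ((k : ℝ) * δα) := by
    rw [Real.rpow_def_of_pos two_pos]
    have h := Real.add_one_le_exp (Real.log 2 * ((k : ℝ) * δα))
    linarith
  have ht : 2 + 2 * c₀ ^ δα ≤ c₀ ^ δα * w := by
    have h := mul_le_mul_of_nonneg_left hw2 hcd.le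
    have h2 : c₀ ^ δα * (2 / c₀ ^ δα) = 2 := by field_simp
    nlinarith
  have hA1 : w + 1 ≤ c₀ ^ δα * w ^ 2 := by nlinarith
  have hA2 : 1 ≤ c₀ ^ δα * δα * Real.log 2 * w ^ 2 := by
    have hpos : (0 : ℝ) < c₀ ^ δα * δα * Real.log 2 := by positivity
    have h := mul_le_mul_of_nonneg_left hw3 hpos.le
    have h2 : (c₀ ^ δα * δα * Real.log 2) * (1 / (c₀ ^ δα * δα * Real.log 2)) = 1 := by
      field_simp
    nlinarith
  have h4 : c₀ ^ δα * (1 + (k : ℝ) * δα * Real.log 2) * w ^ 2 ≤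
      c₀ ^ δα * (2 : ℝ) ^ ((k : ℝ) * δα) * w ^ 2 := by
    have hww : (0 : ℝ) ≤ w ^ 2 := sq_nonneg w
    nlinarith
  nlinarith

lemma tail_ge {q α β r a : ℝ} (n : ℕ) (N : ℕ)
    (hq : 0 < q) (hα : 0 < α) (hβ : 0 < β) (hβα : β < α)
    (hr : 0 < r) (hr2 : r ≤ 1 / 2) (ha : 0 < a) :
    a * r ^ ((n : ℝ) / q + 2 / α) * 2 ^ N ≤
      (a * ((2 : ℝ) ^ ((((n : ℝ) / q + 2 / α) + 1) / (β / α))) ^ N) *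
        (1 - r * (2 - (1 / 2) ^ N)) ^ ((n : ℝ) / q + 2 / α) := by
  set κα : ℝ := (n : ℝ) / q + 2 / α with hκα
  have hκα0 : 0 ≤ κα := by
    have : (0:ℝ) ≤ (n : ℝ) / q := by positivity
    have : (0:ℝ) < 2 / α := by positivity
    simp only [hκα]; linarith
  have hθ0 : 0 < β / α := div_pos hβ hα
  have hθ1 : β / α < 1 := (div_lt_one hα).2 hβα
  have hhalf : (0:ℝ) < (1/2 : ℝ) ^ N := by positivity
  have h1 : r * (1 / 2) ^ N ≤ 1 - r * (2 - (1 / 2) ^ N) := by nlinarith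
  have h1' : (0:ℝ) < r * (1/2) ^ N := by positivity
  have h2 : (r * (1 / 2) ^ N) ^ κα ≤ (1 - r * (2 - (1 / 2) ^ N)) ^ κα :=
    Real.rpow_le_rpow h1'.le h1 hκα0
  -- (r * (1/2)^N)^κα = r^κα * 2^(-(N:ℝ)*κα)
  have h3 : (r * (1 / 2) ^ N) ^ κα = r ^ κα * (2:ℝ) ^ (-(N:ℝ) * κα) := by
    rw [Real.mul_rpow hr.le (by positivity)]
    congr 1
    rw [show ((1:ℝ)/2) = (2:ℝ)^(-(1:ℝ)) by
        rw [Real.rpow_neg_one]; norm_num, ← Real.rpow_natCast ((2:ℝ)^(-(1:ℝ))) N,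
      ← Real.rpow_mul (by norm_num : (0:ℝ) ≤ 2), ← Real.rpow_mul (by norm_num : (0:ℝ) ≤ 2)]
    ring_nf
  -- lam ^ N ≥ 2 ^ ((κα+1) * N)
  have hlamge : (2:ℝ) ^ ((κα + 1) * (N:ℝ)) ≤ ((2 : ℝ) ^ ((κα + 1) / (β / α))) ^ N := by
    rw [← Real.rpow_natCast ((2:ℝ) ^ ((κα + 1) / (β / α))) N,
      ← Real.rpow_mul (by norm_num : (0:ℝ) ≤ 2)]
    apply (Real.rpow_le_rpow_left_iff one_lt_two).2
    have hκα1 : (0:ℝ) < κα + 1 := by linarith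
    have hstep : κα + 1 ≤ (κα + 1) / (β / α) := by
      rw [le_div_iff₀ hθ0]
      nlinarith [mul_nonneg hκα1.le (by linarith : (0:ℝ) ≤ 1 - β / α)]
    have hNn : (0:ℝ) ≤ (N:ℝ) := Nat.cast_nonneg N
    nlinarith
  -- combine
  have key : a * r ^ κα * 2 ^ N =
      (a * (2:ℝ) ^ ((κα + 1) * (N:ℝ))) * (r ^ κα * (2:ℝ) ^ (-(N:ℝ) * κα)) := by
    have h2N : ((2:ℝ)) ^ (N:ℕ) = (2:ℝ) ^ ((κα + 1) * (N:ℝ)) * (2:ℝ) ^ (-(N:ℝ) * κα) := by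
      rw [← Real.rpow_add two_pos,
        show (κα + 1) * (N:ℝ) + -(N:ℝ) * κα = ((N:ℕ):ℝ) by push_cast; ring,
        Real.rpow_natCast]
    rw [h2N]; ring
  rw [key]
  have e1 : (0:ℝ) ≤ a * (2:ℝ) ^ ((κα + 1) * (N:ℝ)) := by positivity
  have e2 : a * (2:ℝ) ^ ((κα + 1) * (N:ℝ)) ≤ a * ((2 : ℝ) ^ ((κα + 1) / (β / α))) ^ N :=
    mul_le_mul_of_nonneg_left hlamge ha.le
  calc (a * (2:ℝ) ^ ((κα + 1) * (N:ℝ))) * (r ^ κα * (2:ℝ) ^ (-(N:ℝ) * κα))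
      = (a * (2:ℝ) ^ ((κα + 1) * (N:ℝ))) * ((r * (1/2) ^ N) ^ κα) := by rw [h3]
    _ ≤ (a * ((2 : ℝ) ^ ((κα + 1) / (β / α))) ^ N) * ((1 - r * (2 - (1 / 2) ^ N)) ^ κα) := by
        apply mul_le_mul e2 h2 (by positivity) (by positivity)



set_option maxHeartbeats 2000000 in
theorem exponent_reduction_time
    {Ω : Type*} [MeasurableSpace Ω] (P : Measure Ω) [IsProbabilityMeasure P]
    (n : ℕ) (hn : 1 ≤ n) (q α β : ℝ) (hq : 0 < q) (hα : 0 < α)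
    (hβ₁ : α / 2 < β) (hβ₂ : β < α)
    (u : Ω → ℝ × (Fin n → ℝ) → ℝ) (hu : Measurable (Function.uncurry u))
    (hfin : ∀ᵐ ω ∂P,
      mixedNorm n α q (Set.Ioc (0 : ℝ) 1) (Metric.ball (0 : Fin n → ℝ) 1) (u ω) < ⊤)
    (δα Γα : ℝ) (hδα : 0 < δα) (hΓα : 1 ≤ Γα)
    (H : ∀ r R : ℝ, 0 < r → r < R → R ≤ 1 → ∀ a > (0 : ℝ), ∀ Γ > Γα,
      P {ω | supNorm n (pCyl n r (1, 0)) (u ω) > ENNReal.ofReal a ∧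
          ENNReal.ofReal ((R - r) ^ (-((n : ℝ) / q + 2 / α))) *
            mixedNorm n α q (Set.Ioc (1 - R ^ 2) 1) (Metric.ball (0 : Fin n → ℝ) R) (u ω)
            ≤ ENNReal.ofReal (a / Γ)} ≤
        ENNReal.ofReal (Real.exp (-(Γ ^ δα / R ^ 2)))) :
    ∃ δβ > (0 : ℝ), ∃ Γβ ≥ (1 : ℝ), ∀ Γ > Γβ, ∀ a > (0 : ℝ), ∀ r : ℝ, 0 < r → r ≤ 1 / 2 →
      P {ω | supNorm n (pCyl n r (1, 0)) (u ω) > ENNReal.ofReal a ∧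
          ENNReal.ofReal (r ^ (-((n : ℝ) / q + 2 / β))) *
            mixedNorm n β q (Set.Ioc (1 - (2 * r) ^ 2) 1)
              (Metric.ball (0 : Fin n → ℝ) (2 * r)) (u ω)
            ≤ ENNReal.ofReal (a / Γ)} ≤
        ENNReal.ofReal (Real.exp (-(Γ ^ δβ / (4 * r ^ 2)))) := by
  classical
  have hβ0 : 0 < β := lt_trans (by positivity) hβ₁
  refine ⟨β / α * δα / 2, div_pos (mul_pos (div_pos hβ0 hα) hδα) two_pos, ?_⟩
  set κα : ℝ := (n : ℝ) / q + 2 / α with hκα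
  set θ : ℝ := β / α with hθdef
  have hθ0 : 0 < θ := div_pos hβ0 hα
  have hθ1 : θ < 1 := (div_lt_one hα).2 hβ₂
  have hκα0 : 0 < κα := by rw [hκα]; positivity
  set lam : ℝ := (2 : ℝ) ^ ((κα + 1) / θ) with hlam
  have hlam0 : 0 < lam := Real.rpow_pos_of_pos two_pos _
  have hlam2 : (2 : ℝ) ^ (κα + 1) ≤ lam := by
    rw [hlam]
    apply Real.rpow_le_rpow_of_exponent_le one_le_two
    rw [le_div_iff₀ hθ0]
    nlinarith
  set c₀ : ℝ := (2 : ℝ) ^ (-κα) * lam ^ (θ - 1) * (4 : ℝ) ^ (-((n : ℝ) / q) * (1 - θ))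
    with hc₀
  have hc00 : 0 < c₀ := by rw [hc₀]; positivity
  set K₀ : ℝ := max 1 (max (2 / c₀ ^ δα + 2) (1 / (c₀ ^ δα * δα * Real.log 2))) with hK₀
  have hK₀1 : (1 : ℝ) ≤ K₀ := le_max_left _ _
  refine ⟨max 1 (max ((Γα / c₀) ^ (1 / θ)) (K₀ ^ (2 / (θ * δα)))), le_max_left _ _, ?_⟩
  intro Γ hΓ a ha r hr hr2
  have hΓ1 : 1 < Γ := lt_of_le_of_lt (le_max_left _ _) hΓ
  have hΓ0 : 0 < Γ := lt_trans one_pos hΓ1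
  -- consequences of Γ > Γβ
  have hcΓ : Γα < c₀ * Γ ^ θ := by
    have hnn : (0 : ℝ) ≤ Γα / c₀ := div_nonneg (le_trans zero_le_one hΓα) hc00.le
    have h := Real.rpow_lt_rpow (Real.rpow_nonneg hnn _)
      (lt_of_le_of_lt ((le_max_left _ _).trans (le_max_right 1 _)) hΓ) hθ0
    rw [← Real.rpow_mul hnn, one_div, inv_mul_cancel₀ hθ0.ne', Real.rpow_one] at h
    have h2 := (div_lt_iff₀ hc00).mp h
    linarith
  have hwK : K₀ < Γ ^ (θ * δα / 2) := by
    have hnn : (0 : ℝ) ≤ K₀ := le_trans zero_le_one hK₀1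
    have h := Real.rpow_lt_rpow (Real.rpow_nonneg hnn _)
      (lt_of_le_of_lt ((le_max_right _ _).trans (le_max_right 1 _)) hΓ)
      (by positivity : (0:ℝ) < θ * δα / 2)
    rw [← Real.rpow_mul hnn] at h
    rw [show 2 / (θ * δα) * (θ * δα / 2) = 1 by field_simp, Real.rpow_one] at h
    exact h
  have hw1 : (1 : ℝ) ≤ Γ ^ (θ * δα / 2) := le_of_lt (lt_of_le_of_lt hK₀1 hwK)
  have hw2 : 2 / c₀ ^ δα + 2 ≤ Γ ^ (θ * δα / 2) :=
    (((le_max_left _ _).trans (le_max_right _ _)).trans_lt hwK).le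
  have hw3 : 1 / (c₀ ^ δα * δα * Real.log 2) ≤ Γ ^ (θ * δα / 2) :=
    (((le_max_right _ _).trans (le_max_right _ _)).trans_lt hwK).le
  -- sequences
  set R : ℕ → ℝ := fun k => r * (2 - (1 / 2) ^ k) with hRdef
  set aseq : ℕ → ℝ := fun k => a * lam ^ k with haseqdef
  have hhalf : ∀ k : ℕ, (0 : ℝ) < (1 / 2) ^ k := fun k => by positivity
  have hhalf1 : ∀ k : ℕ, ((1 : ℝ) / 2) ^ k ≤ 1 :=
    fun k => pow_le_one₀ (by norm_num) (by norm_num)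
  have hRpos : ∀ k, 0 < R k := by
    intro k; simp only [hRdef]; nlinarith [hhalf k, hhalf1 k]
  have hRmono : ∀ k, R k < R (k + 1) := by
    intro k; simp only [hRdef]
    have h := pow_lt_pow_right_of_lt_one₀ (by norm_num : (0:ℝ) < 1/2)
      (by norm_num : (1:ℝ)/2 < 1) (lt_add_one k)
    exact mul_lt_mul_of_pos_left (by linarith) hr
  have hR2r : ∀ k, R k < 2 * r := by
    intro k; simp only [hRdef]; nlinarith [hhalf k]
  have hR1 : ∀ k, R k ≤ 1 := fun k => le_trans (hR2r k).le (by linarith)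
  have hRlt1 : ∀ k, R k < 1 := fun k => lt_of_lt_of_le (hR2r k) (by linarith)
  have hgap : ∀ k, R (k + 1) - R k = r * (1 / 2) ^ (k + 1) := by
    intro k; simp only [hRdef, pow_succ]; ring
  have haseqpos : ∀ k, 0 < aseq k := fun k => by
    simp only [haseqdef]; positivity
  -- the event set
  set Eset : Set Ω := {ω | supNorm n (pCyl n r (1, 0)) (u ω) > ENNReal.ofReal a ∧
      ENNReal.ofReal (r ^ (-((n : ℝ) / q + 2 / β))) *
        mixedNorm n β q (Set.Ioc (1 - (2 * r) ^ 2) 1)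
          (Metric.ball (0 : Fin n → ℝ) (2 * r)) (u ω)
        ≤ ENNReal.ofReal (a / Γ)} with hEset
  have hNβ : ∀ ω ∈ Eset, mixedNorm n β q (Set.Ioc (1 - (2 * r) ^ 2) 1)
      (Metric.ball (0 : Fin n → ℝ) (2 * r)) (u ω)
      ≤ ENNReal.ofReal (r ^ ((n : ℝ) / q + 2 / β) * (a / Γ)) := by
    intro ω hω
    obtain ⟨h1, h2⟩ := hω
    have hrκ : (0 : ℝ) < r ^ ((n : ℝ) / q + 2 / β) := Real.rpow_pos_of_pos hr _
    calc mixedNorm n β q (Set.Ioc (1 - (2 * r) ^ 2) 1)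
          (Metric.ball (0 : Fin n → ℝ) (2 * r)) (u ω)
        = ENNReal.ofReal (r ^ ((n : ℝ) / q + 2 / β)) *
            (ENNReal.ofReal (r ^ (-((n : ℝ) / q + 2 / β))) *
              mixedNorm n β q (Set.Ioc (1 - (2 * r) ^ 2) 1)
                (Metric.ball (0 : Fin n → ℝ) (2 * r)) (u ω)) := by
          rw [← mul_assoc, ← ENNReal.ofReal_mul hrκ.le, ← Real.rpow_add hr,
            add_neg_cancel, Real.rpow_zero, ENNReal.ofReal_one, one_mul]
      _ ≤ ENNReal.ofReal (r ^ ((n : ℝ) / q + 2 / β)) * ENNReal.ofReal (a / Γ) :=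
          mul_le_mul_right h2 _
      _ = ENNReal.ofReal (r ^ ((n : ℝ) / q + 2 / β) * (a / Γ)) :=
          (ENNReal.ofReal_mul hrκ.le).symm
  set F : ℕ → Set Ω := fun k => Eset ∩
      {ω | ENNReal.ofReal (aseq k) < supNorm n (pCyl n (R k) (1, 0)) (u ω)} with hF
  -- single step estimate
  have hstep : ∀ k : ℕ, P (F k) ≤
      ENNReal.ofReal (Real.exp (-(Γ ^ (θ * δα / 2) / (4 * r ^ 2)) - ((k : ℝ) + 1)))
        + P (F (k + 1)) := by
    intro k
    have h2kge : (1 : ℝ) ≤ 2 ^ k := one_le_pow₀ one_le_two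
    have hΓ'pos : 0 < c₀ * 2 ^ k * Γ ^ θ := by positivity
    have hΓ'k : Γα < c₀ * 2 ^ k * Γ ^ θ := by
      nlinarith [Real.rpow_pos_of_pos hΓ0 θ]
    have hHk := H (R k) (R (k + 1)) (hRpos k) (hRmono k) (hR1 (k + 1)) (aseq k)
      (haseqpos k) (c₀ * 2 ^ k * Γ ^ θ) hΓ'k
    have hexpk : ENNReal.ofReal (Real.exp (-((c₀ * 2 ^ k * Γ ^ θ) ^ δα / R (k + 1) ^ 2)))
        ≤ ENNReal.ofReal (Real.exp (-(Γ ^ (θ * δα / 2) / (4 * r ^ 2)) - ((k : ℝ) + 1))) := by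
      apply ENNReal.ofReal_le_ofReal
      apply Real.exp_le_exp.mpr
      have hdecomp : (c₀ * 2 ^ k * Γ ^ θ) ^ δα
          = c₀ ^ δα * (2 : ℝ) ^ ((k : ℝ) * δα) * (Γ ^ (θ * δα / 2)) ^ 2 := by
        rw [Real.mul_rpow (by positivity) (Real.rpow_nonneg hΓ0.le θ),
          Real.mul_rpow hc00.le (by positivity)]
        congr 1
        · congr 1
          rw [← Real.rpow_natCast (2 : ℝ) k, ← Real.rpow_mul (by norm_num : (0:ℝ) ≤ 2)]
        · rw [← Real.rpow_natCast (Γ ^ (θ * δα / 2)) 2, ← Real.rpow_mul hΓ0.le,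
            ← Real.rpow_mul hΓ0.le]
          congr 1
          push_cast
          ring
      have hxk := xk_ge hc00 hδα hw1 hw2 hw3 k
      rw [← hdecomp] at hxk
      have h4r : (0 : ℝ) < 4 * r ^ 2 := by positivity
      have h4r1 : 4 * r ^ 2 ≤ 1 := by nlinarith
      have hRsq : R (k + 1) ^ 2 ≤ 4 * r ^ 2 := by nlinarith [hR2r (k + 1), hRpos (k + 1)]
      have hR2pos : 0 < R (k + 1) ^ 2 := pow_pos (hRpos (k + 1)) 2
      have hXnn : (0 : ℝ) ≤ (c₀ * 2 ^ k * Γ ^ θ) ^ δα := Real.rpow_nonneg hΓ'pos.le _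
      have t0 : (Γ ^ (θ * δα / 2) + ((k : ℝ) + 1)) / (4 * r ^ 2)
          = Γ ^ (θ * δα / 2) / (4 * r ^ 2) + ((k : ℝ) + 1) / (4 * r ^ 2) := add_div _ _ _
      have t1 : (k : ℝ) + 1 ≤ ((k : ℝ) + 1) / (4 * r ^ 2) := by
        rw [le_div_iff₀ h4r]
        nlinarith [Nat.cast_nonneg (α := ℝ) k]
      have t2 : (Γ ^ (θ * δα / 2) + ((k : ℝ) + 1)) / (4 * r ^ 2)
          ≤ (c₀ * 2 ^ k * Γ ^ θ) ^ δα / (4 * r ^ 2) := by gcongr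
      have t3 : (c₀ * 2 ^ k * Γ ^ θ) ^ δα / (4 * r ^ 2)
          ≤ (c₀ * 2 ^ k * Γ ^ θ) ^ δα / R (k + 1) ^ 2 :=
        div_le_div_of_nonneg_left hXnn hR2pos hRsq
      linarith
    have hsub : F k ⊆
        ({ω | supNorm n (pCyl n (R k) (1, 0)) (u ω) > ENNReal.ofReal (aseq k) ∧
          ENNReal.ofReal ((R (k + 1) - R k) ^ (-κα)) *
            mixedNorm n α q (Set.Ioc (1 - R (k + 1) ^ 2) 1)
              (Metric.ball (0 : Fin n → ℝ) (R (k + 1))) (u ω)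
            ≤ ENNReal.ofReal (aseq k / (c₀ * 2 ^ k * Γ ^ θ))} ∪ F (k + 1)) := by
      intro ω hω
      by_cases hc : ENNReal.ofReal (aseq (k + 1)) <
          supNorm n (pCyl n (R (k + 1)) (1, 0)) (u ω)
      · exact Or.inr ⟨hω.1, hc⟩
      · push_neg at hc
        refine Or.inl ⟨hω.2, ?_⟩
        have hD : (2 * R (k + 1)) ^ n ≤ (4 * r) ^ n := by
          apply pow_le_pow_left₀ (by nlinarith [hRpos (k + 1)])
          nlinarith [hR2r (k + 1)]
        have hint := interp_bound (n := n)
          (hu.of_uncurry_left : Measurable (u ω)) hq hβ0 hβ₂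
          (hRpos (k + 1)) (hR2r (k + 1)).le (haseqpos (k + 1)).le
          (by positivity : (0:ℝ) ≤ r ^ ((n : ℝ) / q + 2 / β) * (a / Γ)) hD hc
          (hNβ ω hω.1)
        have keq := key_eq (q := q) (α := α) (β := β) (r := r) (a := a) (Γ := Γ)
          n k hq hα hβ0 hβ₂ hr ha hΓ0
        rw [← hκα, ← hθdef, ← hlam, ← hc₀] at keq
        calc ENNReal.ofReal ((R (k + 1) - R k) ^ (-κα)) *
              mixedNorm n α q (Set.Ioc (1 - R (k + 1) ^ 2) 1)
                (Metric.ball (0 : Fin n → ℝ) (R (k + 1))) (u ω)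
            ≤ ENNReal.ofReal ((R (k + 1) - R k) ^ (-κα)) *
              ENNReal.ofReal (((aseq (k + 1) ^ q * (4 * r) ^ n) ^ ((α - β) / q) *
                (r ^ ((n : ℝ) / q + 2 / β) * (a / Γ)) ^ β) ^ (1 / α)) :=
              mul_le_mul_right hint _
          _ = ENNReal.ofReal ((R (k + 1) - R k) ^ (-κα) *
              ((aseq (k + 1) ^ q * (4 * r) ^ n) ^ ((α - β) / q) *
                (r ^ ((n : ℝ) / q + 2 / β) * (a / Γ)) ^ β) ^ (1 / α)) := by
              rw [← ENNReal.ofReal_mul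
                (Real.rpow_nonneg (by nlinarith [hRmono k] : (0:ℝ) ≤ R (k+1) - R k) _)]
          _ = ENNReal.ofReal (aseq k / (c₀ * 2 ^ k * Γ ^ θ)) := by
              rw [hgap k]
              simp only [haseqdef]
              rw [keq]
    calc P (F k) ≤ _ := measure_mono hsub
      _ ≤ P {ω | supNorm n (pCyl n (R k) (1, 0)) (u ω) > ENNReal.ofReal (aseq k) ∧
            ENNReal.ofReal ((R (k + 1) - R k) ^ (-κα)) *
              mixedNorm n α q (Set.Ioc (1 - R (k + 1) ^ 2) 1)
                (Metric.ball (0 : Fin n → ℝ) (R (k + 1))) (u ω)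
              ≤ ENNReal.ofReal (aseq k / (c₀ * 2 ^ k * Γ ^ θ))} + P (F (k + 1)) :=
          measure_union_le _ _
      _ ≤ _ := add_le_add (hHk.trans hexpk) le_rfl
  -- iteration
  have hiter : ∀ N : ℕ, P Eset ≤ (∑ k ∈ Finset.range N,
      ENNReal.ofReal (Real.exp (-(Γ ^ (θ * δα / 2) / (4 * r ^ 2)) - ((k : ℝ) + 1))))
      + P (F N) := by
    intro N
    induction N with
    | zero =>
      simp only [Finset.range_zero, Finset.sum_empty, zero_add]
      refine measure_mono fun ω hω => ⟨hω, ?_⟩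
      have hR0 : R 0 = r := by norm_num [hRdef]
      have ha0 : aseq 0 = a := by simp [haseqdef]
      show ENNReal.ofReal (aseq 0) < supNorm n (pCyl n (R 0) (1, 0)) (u ω)
      rw [hR0, ha0]
      exact hω.1
    | succ N ih =>
      calc P Eset ≤ _ := ih
        _ ≤ (∑ k ∈ Finset.range N,
              ENNReal.ofReal (Real.exp (-(Γ ^ (θ * δα / 2) / (4 * r ^ 2)) - ((k : ℝ) + 1))))
            + (ENNReal.ofReal
                (Real.exp (-(Γ ^ (θ * δα / 2) / (4 * r ^ 2)) - ((N : ℝ) + 1)))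
              + P (F (N + 1))) := add_le_add le_rfl (hstep N)
        _ = _ := by rw [Finset.sum_range_succ]; ring
  -- sum estimate
  have hsum : ∀ N : ℕ, (∑ k ∈ Finset.range N,
      ENNReal.ofReal (Real.exp (-(Γ ^ (θ * δα / 2) / (4 * r ^ 2)) - ((k : ℝ) + 1))))
      ≤ ENNReal.ofReal (Real.exp (-(Γ ^ (θ * δα / 2) / (4 * r ^ 2)))) := by
    intro N
    rw [← ENNReal.ofReal_sum_of_nonneg (fun i _ => (Real.exp_pos _).le)]
    apply ENNReal.ofReal_le_ofReal
    have hexp1 : Real.exp (-1 : ℝ) ≤ 1 / 2 := by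
      have h2e : (2 : ℝ) ≤ Real.exp 1 := by linarith [Real.add_one_le_exp 1]
      have hep : (0 : ℝ) < Real.exp 1 := Real.exp_pos 1
      rw [Real.exp_neg]
      nlinarith [mul_inv_cancel₀ hep.ne', inv_nonneg.mpr hep.le]
    calc ∑ k ∈ Finset.range N,
          Real.exp (-(Γ ^ (θ * δα / 2) / (4 * r ^ 2)) - ((k : ℝ) + 1))
        = Real.exp (-(Γ ^ (θ * δα / 2) / (4 * r ^ 2))) *
            ∑ k ∈ Finset.range N, Real.exp (-((k : ℝ) + 1)) := by
          rw [Finset.mul_sum]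
          refine Finset.sum_congr rfl fun k _ => ?_
          rw [← Real.exp_add]
          ring_nf
      _ ≤ Real.exp (-(Γ ^ (θ * δα / 2) / (4 * r ^ 2))) * 1 := by
          apply mul_le_mul_of_nonneg_left ?_ (Real.exp_pos _).le
          calc ∑ k ∈ Finset.range N, Real.exp (-((k : ℝ) + 1))
              ≤ ∑ k ∈ Finset.range N, ((1 : ℝ) / 2) ^ (k + 1) := by
                apply Finset.sum_le_sum
                intro k _
                have he : Real.exp (-((k : ℝ) + 1)) = (Real.exp (-1)) ^ (k + 1) := by
                  rw [← Real.exp_nat_mul]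
                  congr 1
                  push_cast
                  ring
                rw [he]
                exact pow_le_pow_left₀ (Real.exp_pos _).le hexp1 _
            _ ≤ 1 := by
                have h := sum_geometric_two_le N
                have heq : ∑ k ∈ Finset.range N, ((1 : ℝ) / 2) ^ (k + 1)
                    = (∑ k ∈ Finset.range N, ((1 : ℝ) / 2) ^ k) * (1 / 2) := by
                  rw [Finset.sum_mul]
                  exact Finset.sum_congr rfl fun k _ => pow_succ _ _
                rw [heq]
                linarith
      _ = Real.exp (-(Γ ^ (θ * δα / 2) / (4 * r ^ 2))) := mul_one _
  -- tail: the probability of F N tends to zero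
  have hfinV : ∀ᵐ ω ∂P, mixedNorm n α q (Set.Ioc (1 - 1 ^ 2 : ℝ) 1)
      (Metric.ball (0 : Fin n → ℝ) 1) (u ω) < ⊤ := by
    have hIoc : Set.Ioc (1 - 1 ^ 2 : ℝ) 1 = Set.Ioc (0 : ℝ) 1 := by norm_num
    rw [hIoc]
    exact hfin
  have hVmeas : Measurable fun ω => mixedNorm n α q (Set.Ioc (1 - 1 ^ 2 : ℝ) 1)
      (Metric.ball (0 : Fin n → ℝ) 1) (u ω) := measurable_mixedNorm u hu α q _ _
  set L : ℕ → ℝ := fun N => Real.sqrt (a * r ^ κα * 2 ^ N) with hLdef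
  set C : ℕ → ℝ := fun N => Real.sqrt (aseq N * (1 - R N) ^ κα) with hCdef
  have harκ : (0 : ℝ) < a * r ^ κα := mul_pos ha (Real.rpow_pos_of_pos hr _)
  have hWpos : ∀ N, 0 < aseq N * (1 - R N) ^ κα := fun N =>
    mul_pos (haseqpos N) (Real.rpow_pos_of_pos (by linarith [hRlt1 N]) _)
  have hCpos : ∀ N, 0 < C N := fun N => Real.sqrt_pos.2 (hWpos N)
  have hLC : ∀ N, L N ≤ C N := by
    intro N
    apply Real.sqrt_le_sqrt
    have ht := tail_ge (q := q) (α := α) (β := β) (r := r) (a := a) n N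
      hq hα hβ0 hβ₂ hr hr2 ha
    rw [← hκα, ← hθdef, ← hlam] at ht
    simpa [haseqdef, hRdef] using ht
  have hLmono : Monotone L := by
    intro i j hij
    apply Real.sqrt_le_sqrt
    exact mul_le_mul_of_nonneg_left (pow_le_pow_right₀ one_le_two hij) harκ.le
  have hLunb : ∀ b : ℝ, ∃ N, b ≤ L N := by
    intro b
    obtain ⟨N, hN⟩ := pow_unbounded_of_one_lt (b ^ 2 / (a * r ^ κα)) one_lt_two
    refine ⟨N, ?_⟩
    have hb2 : b ^ 2 ≤ a * r ^ κα * 2 ^ N := by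
      have := (div_lt_iff₀ harκ).mp hN
      nlinarith
    calc b ≤ |b| := le_abs_self b
      _ = Real.sqrt (b ^ 2) := (Real.sqrt_sq_eq_abs b).symm
      _ ≤ L N := Real.sqrt_le_sqrt hb2
  have hLtend : Tendsto L atTop atTop := tendsto_atTop_atTop_of_monotone hLmono hLunb
  have hPV0 : Tendsto (fun N => P {ω | ENNReal.ofReal (L N) <
      mixedNorm n α q (Set.Ioc (1 - 1 ^ 2 : ℝ) 1)
        (Metric.ball (0 : Fin n → ℝ) 1) (u ω)}) atTop (𝓝 0) := by
    have hanti : Antitone (fun N => {ω | ENNReal.ofReal (L N) <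
        mixedNorm n α q (Set.Ioc (1 - 1 ^ 2 : ℝ) 1)
          (Metric.ball (0 : Fin n → ℝ) 1) (u ω)}) := by
      intro i j hij ω hω
      exact lt_of_le_of_lt (ENNReal.ofReal_le_ofReal (hLmono hij)) hω
    have hms : ∀ N, MeasurableSet {ω | ENNReal.ofReal (L N) <
        mixedNorm n α q (Set.Ioc (1 - 1 ^ 2 : ℝ) 1)
          (Metric.ball (0 : Fin n → ℝ) 1) (u ω)} :=
      fun N => measurableSet_lt measurable_const hVmeas
    have h0 : P (⋂ N, {ω | ENNReal.ofReal (L N) <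
        mixedNorm n α q (Set.Ioc (1 - 1 ^ 2 : ℝ) 1)
          (Metric.ball (0 : Fin n → ℝ) 1) (u ω)}) = 0 := by
      refine measure_mono_null ?_ (ae_iff.mp hfinV)
      intro ω hω
      simp only [Set.mem_iInter, Set.mem_setOf_eq] at hω ⊢
      intro hlt
      obtain ⟨N, hNN⟩ := hLunb ((mixedNorm n α q (Set.Ioc (1 - 1 ^ 2 : ℝ) 1)
        (Metric.ball (0 : Fin n → ℝ) 1) (u ω)).toReal)
      have := hω N
      rw [← ENNReal.ofReal_toReal hlt.ne] at this
      exact absurd (lt_of_lt_of_le this (ENNReal.ofReal_le_ofReal hNN)) (lt_irrefl _)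
    have := tendsto_measure_iInter_atTop (fun N => (hms N).nullMeasurableSet) hanti
      ⟨0, measure_ne_top P _⟩
    rw [h0] at this
    exact this
  have htail : ∀ᶠ N in atTop, P (F N) ≤
      ENNReal.ofReal (Real.exp (-(L N ^ δα))) +
        P {ω | ENNReal.ofReal (L N) <
          mixedNorm n α q (Set.Ioc (1 - 1 ^ 2 : ℝ) 1)
            (Metric.ball (0 : Fin n → ℝ) 1) (u ω)} := by
    filter_upwards [hLtend.eventually_gt_atTop Γα] with N hN
    have hΓC : Γα < C N := lt_of_lt_of_le hN (hLC N)
    have hHN := H (R N) 1 (hRpos N) (hRlt1 N) le_rfl (aseq N) (haseqpos N) (C N) hΓC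
    have hexpT : ENNReal.ofReal (Real.exp (-(C N ^ δα / 1 ^ 2)))
        ≤ ENNReal.ofReal (Real.exp (-(L N ^ δα))) := by
      apply ENNReal.ofReal_le_ofReal
      apply Real.exp_le_exp.mpr
      rw [one_pow, div_one]
      exact neg_le_neg (Real.rpow_le_rpow (Real.sqrt_nonneg _) (hLC N) hδα.le)
    have hsubT : F N ⊆
        ({ω | supNorm n (pCyl n (R N) (1, 0)) (u ω) > ENNReal.ofReal (aseq N) ∧
          ENNReal.ofReal ((1 - R N) ^ (-κα)) *
            mixedNorm n α q (Set.Ioc (1 - 1 ^ 2) 1)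
              (Metric.ball (0 : Fin n → ℝ) 1) (u ω)
            ≤ ENNReal.ofReal (aseq N / C N)} ∪
        {ω | ENNReal.ofReal (L N) <
          mixedNorm n α q (Set.Ioc (1 - 1 ^ 2 : ℝ) 1)
            (Metric.ball (0 : Fin n → ℝ) 1) (u ω)}) := by
      intro ω hω
      by_cases hc : ENNReal.ofReal (L N) <
          mixedNorm n α q (Set.Ioc (1 - 1 ^ 2 : ℝ) 1)
            (Metric.ball (0 : Fin n → ℝ) 1) (u ω)
      · exact Or.inr hc
      · push_neg at hc
        refine Or.inl ⟨hω.2, ?_⟩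
        have h1R : (0 : ℝ) < 1 - R N := by linarith [hRlt1 N]
        have hreal : (1 - R N) ^ (-κα) * L N ≤ aseq N / C N := by
          have hC2 : C N ^ 2 = aseq N * (1 - R N) ^ κα := Real.sq_sqrt (hWpos N).le
          rw [Real.rpow_neg h1R.le, inv_mul_eq_div, div_le_div_iff₀
            (Real.rpow_pos_of_pos h1R _) (hCpos N)]
          nlinarith [hLC N, hCpos N, Real.sqrt_nonneg (a * r ^ κα * 2 ^ N),
            Real.rpow_pos_of_pos h1R κα]
        calc ENNReal.ofReal ((1 - R N) ^ (-κα)) *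
              mixedNorm n α q (Set.Ioc (1 - 1 ^ 2) 1)
                (Metric.ball (0 : Fin n → ℝ) 1) (u ω)
            ≤ ENNReal.ofReal ((1 - R N) ^ (-κα)) * ENNReal.ofReal (L N) :=
              mul_le_mul_right hc _
          _ = ENNReal.ofReal ((1 - R N) ^ (-κα) * L N) :=
              (ENNReal.ofReal_mul (Real.rpow_nonneg h1R.le _)).symm
          _ ≤ ENNReal.ofReal (aseq N / C N) := ENNReal.ofReal_le_ofReal hreal
    calc P (F N) ≤ _ := measure_mono hsubT
      _ ≤ P {ω | supNorm n (pCyl n (R N) (1, 0)) (u ω) > ENNReal.ofReal (aseq N) ∧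
            ENNReal.ofReal ((1 - R N) ^ (-κα)) *
              mixedNorm n α q (Set.Ioc (1 - 1 ^ 2) 1)
                (Metric.ball (0 : Fin n → ℝ) 1) (u ω)
              ≤ ENNReal.ofReal (aseq N / C N)} +
          P {ω | ENNReal.ofReal (L N) <
            mixedNorm n α q (Set.Ioc (1 - 1 ^ 2 : ℝ) 1)
              (Metric.ball (0 : Fin n → ℝ) 1) (u ω)} := measure_union_le _ _
      _ ≤ _ := add_le_add (hHN.trans hexpT) le_rfl
  have hexptend : Tendsto (fun N => ENNReal.ofReal (Real.exp (-(L N ^ δα))))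
      atTop (𝓝 0) := by
    have h1 : Tendsto (fun N => Real.exp (-(L N ^ δα))) atTop (𝓝 0) :=
      Real.tendsto_exp_neg_atTop_nhds_zero.comp ((tendsto_rpow_atTop hδα).comp hLtend)
    simpa using ENNReal.tendsto_ofReal h1
  have hPFtend : Tendsto (fun N => P (F N)) atTop (𝓝 0) := by
    have hup := hexptend.add hPV0
    rw [add_zero] at hup
    exact tendsto_of_tendsto_of_tendsto_of_le_of_le' tendsto_const_nhds hup
      (Eventually.of_forall fun N => zero_le) htail
  have hfinal : ∀ N : ℕ, P Eset ≤
      ENNReal.ofReal (Real.exp (-(Γ ^ (θ * δα / 2) / (4 * r ^ 2)))) + P (F N) :=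
    fun N => (hiter N).trans (add_le_add (hsum N) le_rfl)
  have hlim : Tendsto (fun N =>
      ENNReal.ofReal (Real.exp (-(Γ ^ (θ * δα / 2) / (4 * r ^ 2)))) + P (F N)) atTop
      (𝓝 (ENNReal.ofReal (Real.exp (-(Γ ^ (θ * δα / 2) / (4 * r ^ 2)))) + 0)) :=
    tendsto_const_nhds.add hPFtend
  have hres := ge_of_tendsto' hlim hfinal
  rw [add_zero] at hres
  exact hres


end
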